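/- arXiv:1804.04553 — 4 statements merged into one kernel-verified Lean document; each statement's English description precedes it below -/
import Mathlib

section
/- If ρ_R(ζ) = Σ_{j=0}^{k-1} γ_j ζ^j is a polynomial with γ_{k-1} ≠ 0 all of whose roots have modulus at most q < 1, then there is a constant C_0, independent of N, such that for every N ≥ 1 the N×N banded lower triangular Toeplitz matrix R_N with diagonal γ_{k-1} and j-th subdiagonal γ_{k-1-j} (for 1 ≤ j ≤ k−1) satisfies ‖R_N^{-1}‖_∞ ≤ C_0. -/
open Matrix Finset Polynomial

noncomputable def infNorm {N : ℕ} (A : Matrix (Fin N) (Fin N) ℝ) : ℝ :=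
  ⨆ i, ∑ j, |A i j|

/-- The banded lower triangular Toeplitz matrix with diagonal γ (k-1) and
j-th subdiagonal γ (k-1-j) for 1 ≤ j ≤ k-1. -/
noncomputable def RNmat (k : ℕ) (γ : ℕ → ℝ) (N : ℕ) : Matrix (Fin N) (Fin N) ℝ :=
  fun i j =>
    if (j : ℕ) ≤ (i : ℕ) ∧ (i : ℕ) - (j : ℕ) ≤ k - 1 then
      γ (k - 1 - ((i : ℕ) - (j : ℕ))) else 0

noncomputable def geomPS (z : ℂ) : PowerSeries ℂ := PowerSeries.mk fun n => z ^ n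

noncomputable def qPS (q : ℝ) : PowerSeries ℝ := PowerSeries.mk fun n => q ^ n

lemma geom_inv (z : ℂ) :
    ((1 - Polynomial.C z * Polynomial.X : ℂ[X]) : PowerSeries ℂ) * geomPS z = 1 := by
  have h : ((1 - Polynomial.C z * Polynomial.X : ℂ[X]) : PowerSeries ℂ)
      = 1 - PowerSeries.C z * PowerSeries.X := by
    push_cast [Polynomial.coe_sub, Polynomial.coe_one, Polynomial.coe_mul, Polynomial.coe_C,
      Polynomial.coe_X]
    rfl
  rw [h, sub_mul, one_mul]
  ext n
  rcases n with _ | n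
  · simp [geomPS, PowerSeries.coeff_zero_eq_constantCoeff]
  · rw [map_sub, mul_assoc, PowerSeries.coeff_C_mul, PowerSeries.coeff_succ_X_mul]
    simp [geomPS, PowerSeries.coeff_one, pow_succ, mul_comm]

lemma coeff_qpow_nonneg {q : ℝ} (hq0 : 0 ≤ q) (c n : ℕ) :
    0 ≤ PowerSeries.coeff n (qPS q ^ c) := by
  induction c generalizing n with
  | zero =>
    rw [pow_zero, PowerSeries.coeff_one]
    positivity
  | succ c ih =>
    rw [pow_succ, mul_comm, PowerSeries.coeff_mul]
    refine Finset.sum_nonneg fun p _ => mul_nonneg ?_ (ih _)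
    simp only [qPS, PowerSeries.coeff_mk]
    positivity

lemma coeff_prod_bound {q : ℝ} (hq0 : 0 ≤ q) (M : Multiset ℂ)
    (hM : ∀ z ∈ M, ‖z‖ ≤ q) (n : ℕ) :
    ‖PowerSeries.coeff n (M.map geomPS).prod‖
      ≤ PowerSeries.coeff n (qPS q ^ Multiset.card M) := by
  induction M using Multiset.induction generalizing n with
  | empty => simp [PowerSeries.coeff_one]; split <;> simp
  | cons z M ih =>
    have hz : ‖z‖ ≤ q := hM z (Multiset.mem_cons_self _ _)
    have hM' : ∀ w ∈ M, ‖w‖ ≤ q := fun w hw => hM w (Multiset.mem_cons_of_mem hw)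
    rw [Multiset.map_cons, Multiset.prod_cons, Multiset.card_cons, pow_succ, mul_comm (qPS q ^ _),
      PowerSeries.coeff_mul, PowerSeries.coeff_mul]
    refine (norm_sum_le _ _).trans (Finset.sum_le_sum fun p _ => ?_)
    rw [norm_mul]
    refine mul_le_mul ?_ (ih hM' _) (norm_nonneg _) ?_
    · simp only [geomPS, PowerSeries.coeff_mk, norm_pow, qPS]
      exact pow_le_pow_left₀ (norm_nonneg _) hz _
    · simp only [qPS, PowerSeries.coeff_mk]
      positivity

lemma conv_partial (f g : ℕ → ℝ) (hf : ∀ i, 0 ≤ f i) (hg : ∀ j, 0 ≤ g j) (N : ℕ) :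
    ∑ m ∈ Finset.range N, ∑ p ∈ Finset.HasAntidiagonal.antidiagonal m, f p.1 * g p.2
      ≤ (∑ i ∈ Finset.range N, f i) * (∑ j ∈ Finset.range N, g j) := by
  have hdisj : Set.PairwiseDisjoint ↑(Finset.range N)
      (Finset.HasAntidiagonal.antidiagonal : ℕ → Finset (ℕ × ℕ)) := by
    intro m _ m' _ hne
    simp only [Finset.disjoint_left]
    intro p hp hp'
    rw [Finset.HasAntidiagonal.mem_antidiagonal] at hp hp'
    exact hne (hp ▸ hp')
  calc ∑ m ∈ Finset.range N, ∑ p ∈ Finset.HasAntidiagonal.antidiagonal m, f p.1 * g p.2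
      = ∑ p ∈ (Finset.range N).biUnion Finset.HasAntidiagonal.antidiagonal, f p.1 * g p.2 :=
        (Finset.sum_biUnion hdisj).symm
    _ ≤ ∑ p ∈ Finset.range N ×ˢ Finset.range N, f p.1 * g p.2 := by
        refine Finset.sum_le_sum_of_subset_of_nonneg ?_ fun p _ _ => mul_nonneg (hf _) (hg _)
        intro p hp
        rw [Finset.mem_biUnion] at hp
        obtain ⟨m, hm, hpm⟩ := hp
        rw [Finset.HasAntidiagonal.mem_antidiagonal] at hpm
        rw [Finset.mem_range] at hm
        rw [Finset.mem_product, Finset.mem_range, Finset.mem_range]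
        omega
    _ = (∑ i ∈ Finset.range N, f i) * (∑ j ∈ Finset.range N, g j) := by
        rw [Finset.sum_product, Finset.sum_mul]
        exact Finset.sum_congr rfl fun i _ => by rw [Finset.mul_sum]

lemma sum_coeff_qpow_le {q : ℝ} (hq0 : 0 ≤ q) (hq1 : q < 1) (c : ℕ) (N : ℕ) :
    ∑ m ∈ Finset.range N, PowerSeries.coeff m (qPS q ^ c) ≤ ((1 - q)⁻¹) ^ c := by
  have h1q : (0:ℝ) < 1 - q := by linarith
  induction c generalizing N with
  | zero =>
    simp only [pow_zero, PowerSeries.coeff_one]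
    rw [Finset.sum_ite_eq' (Finset.range N) 0 fun _ => (1:ℝ)]
    split <;> norm_num
  | succ c ih =>
    have hgeom : ∑ i ∈ Finset.range N, q ^ i ≤ (1 - q)⁻¹ := by
      have h := geom_sum_Ico_le_of_lt_one hq0 hq1 (m := 0) (n := N)
      rw [Finset.range_eq_Ico]
      simpa [one_div] using h
    calc ∑ m ∈ Finset.range N, PowerSeries.coeff m (qPS q ^ (c + 1))
        = ∑ m ∈ Finset.range N, ∑ p ∈ Finset.HasAntidiagonal.antidiagonal m,
            PowerSeries.coeff p.1 (qPS q) * PowerSeries.coeff p.2 (qPS q ^ c) := by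
          refine Finset.sum_congr rfl fun m _ => ?_
          rw [pow_succ, mul_comm, PowerSeries.coeff_mul]
      _ ≤ (∑ i ∈ Finset.range N, PowerSeries.coeff i (qPS q))
            * (∑ j ∈ Finset.range N, PowerSeries.coeff j (qPS q ^ c)) := by
          refine conv_partial (fun i => PowerSeries.coeff i (qPS q)) _ (fun i => ?_)
            (fun j => coeff_qpow_nonneg hq0 c j) N
          simp only [qPS, PowerSeries.coeff_mk]
          positivity
      _ ≤ (1 - q)⁻¹ * ((1 - q)⁻¹) ^ c := by
          refine mul_le_mul ?_ (ih N) ?_ ?_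
          · simpa only [qPS, PowerSeries.coeff_mk] using hgeom
          · exact Finset.sum_nonneg fun j _ => coeff_qpow_nonneg hq0 c j
          · positivity
      _ = ((1 - q)⁻¹) ^ (c + 1) := by ring

lemma reflect_one_X_sub_C (z : ℂ) :
    Polynomial.reflect 1 (Polynomial.X - Polynomial.C z)
      = 1 - Polynomial.C z * Polynomial.X := by
  have h : (Polynomial.X - Polynomial.C z : ℂ[X])
      = Polynomial.C 1 * Polynomial.X ^ 1 + Polynomial.C (-z) * Polynomial.X ^ 0 := by
    simp [sub_eq_add_neg]
  rw [h, Polynomial.reflect_add, Polynomial.reflect_C_mul_X_pow, Polynomial.reflect_C_mul_X_pow]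
  simp [Polynomial.revAt_le, sub_eq_add_neg]

lemma reflect_multiset_prod (M : Multiset ℂ) :
    Polynomial.reflect (Multiset.card M) ((M.map fun a => Polynomial.X - Polynomial.C a).prod)
      = (M.map fun z => 1 - Polynomial.C z * Polynomial.X).prod := by
  induction M using Multiset.induction with
  | empty => simp
  | cons z M ih =>
    rw [Multiset.map_cons, Multiset.prod_cons, Multiset.card_cons, Multiset.map_cons,
      Multiset.prod_cons, add_comm (Multiset.card M) 1,
      Polynomial.reflect_mul _ _ (Polynomial.natDegree_X_sub_C z).le
        (Polynomial.natDegree_multiset_prod_X_sub_C_eq_card M).le,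
      reflect_one_X_sub_C, ih]

theorem stmt4 (k : ℕ) (hk : 1 ≤ k) (γ : ℕ → ℝ) (hγ : γ (k - 1) ≠ 0)
    (q : ℝ) (hq0 : 0 ≤ q) (hq1 : q < 1)
    (hroots : ∀ z : ℂ,
      ((∑ j ∈ Finset.range k, Polynomial.C (γ j) * Polynomial.X ^ j).map
        (algebraMap ℝ ℂ)).eval z = 0 → ‖z‖ ≤ q) :
    ∃ C0 : ℝ, ∀ N : ℕ, 1 ≤ N →
      ∃ B : Matrix (Fin N) (Fin N) ℝ,
        RNmat k γ N * B = 1 ∧ B * RNmat k γ N = 1 ∧ infNorm B ≤ C0 := by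
  classical
  set P : Polynomial ℝ := ∑ j ∈ Finset.range k, Polynomial.C (γ j) * Polynomial.X ^ j with hPdef
  have hPcoeff : ∀ m, P.coeff m = if m < k then γ m else 0 := by
    intro m
    rw [hPdef, Polynomial.finset_sum_coeff]
    simp only [Polynomial.coeff_C_mul, Polynomial.coeff_X_pow, mul_ite, mul_one, mul_zero]
    rw [Finset.sum_ite_eq (Finset.range k) m fun j => γ j]
    simp [Finset.mem_range]
  set Pc : Polynomial ℂ := P.map (algebraMap ℝ ℂ) with hPcdef
  have hPc_coeff : ∀ m, Pc.coeff m = if m < k then ((γ m : ℝ) : ℂ) else 0 := by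
    intro m
    rw [hPcdef, Polynomial.coeff_map, hPcoeff]
    split <;> simp
  have hk1 : k - 1 < k := by omega
  have hlead_ne : Pc.coeff (k - 1) ≠ 0 := by
    rw [hPc_coeff, if_pos hk1]
    exact_mod_cast Complex.ofReal_ne_zero.mpr hγ
  have hPc_ne : Pc ≠ 0 := fun h => hlead_ne (by simp [h])
  have hdegle : Pc.natDegree ≤ k - 1 := by
    refine Polynomial.natDegree_le_iff_coeff_eq_zero.mpr fun m hm => ?_
    rw [hPc_coeff, if_neg (by omega)]
  have hdeg : Pc.natDegree = k - 1 :=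
    le_antisymm hdegle (Polynomial.le_natDegree_of_ne_zero hlead_ne)
  have hleadc : Pc.leadingCoeff = ((γ (k - 1) : ℝ) : ℂ) := by
    rw [Polynomial.leadingCoeff, hdeg, hPc_coeff, if_pos hk1]
  set M : Multiset ℂ := Pc.roots with hMdef
  have hsplit : Pc.Splits := IsAlgClosed.splits Pc
  have hcard : Multiset.card M = k - 1 := by
    rw [hMdef, Polynomial.splits_iff_card_roots.mp hsplit, hdeg]
  have hMq : ∀ z ∈ M, ‖z‖ ≤ q := by
    intro z hz
    exact hroots z (Polynomial.isRoot_of_mem_roots hz)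
  have hfact : Pc = Polynomial.C ((γ (k - 1) : ℝ) : ℂ)
      * (M.map fun a => Polynomial.X - Polynomial.C a).prod := by
    rw [← hleadc]
    exact (Polynomial.C_leadingCoeff_mul_prod_multiset_X_sub_C
        (Polynomial.splits_iff_card_roots.mp hsplit)).symm
  -- the reflected polynomial over ℝ
  set Q : Polynomial ℝ := Polynomial.reflect (k - 1) P with hQdef
  have hQcoeff : ∀ m, Q.coeff m = if m ≤ k - 1 then γ (k - 1 - m) else 0 := by
    intro m
    rw [hQdef, Polynomial.coeff_reflect]
    rcases le_or_gt m (k - 1) with h | h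
    · rw [Polynomial.revAt_le h, hPcoeff, if_pos (by omega), if_pos h]
    · rw [Polynomial.revAt_eq_self_of_lt h, hPcoeff, if_neg (by omega), if_neg (by omega)]
  set Qc : Polynomial ℂ := Q.map (algebraMap ℝ ℂ) with hQcdef
  have hQc_reflect : Qc = Polynomial.reflect (k - 1) Pc := by
    ext m
    rw [hQcdef, Polynomial.coeff_map, Polynomial.coeff_reflect, Polynomial.coeff_reflect,
      Polynomial.coeff_map]
  have hQc_fact : Qc = Polynomial.C ((γ (k - 1) : ℝ) : ℂ)
      * (M.map fun z => 1 - Polynomial.C z * Polynomial.X).prod := by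
    rw [hQc_reflect, hfact, ← hcard, (zero_add (Multiset.card M)).symm]
    rw [Polynomial.reflect_mul _ _ (Polynomial.natDegree_C _).le
      (Polynomial.natDegree_multiset_prod_X_sub_C_eq_card M).le]
    rw [Polynomial.reflect_C, pow_zero, mul_one, reflect_multiset_prod]
  -- power series inverse over ℝ
  have hconst : PowerSeries.constantCoeff (Q : PowerSeries ℝ) ≠ 0 := by
    rw [← PowerSeries.coeff_zero_eq_constantCoeff, Polynomial.coeff_coe, hQcoeff,
      if_pos (Nat.zero_le _), Nat.sub_zero]
    exact hγ
  set S : PowerSeries ℝ := (Q : PowerSeries ℝ)⁻¹ with hSdef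
  have hQS : (Q : PowerSeries ℝ) * S = 1 := PowerSeries.mul_inv_cancel _ hconst
  set b : ℕ → ℝ := fun n => PowerSeries.coeff n S with hbdef
  have hconv : ∀ m, (∑ p ∈ Finset.HasAntidiagonal.antidiagonal m, Q.coeff p.1 * b p.2)
      = if m = 0 then 1 else 0 := by
    intro m
    have h := congrArg (PowerSeries.coeff m) hQS
    rw [PowerSeries.coeff_mul, PowerSeries.coeff_one] at h
    simpa only [Polynomial.coeff_coe] using h
  -- map to ℂ and identify the inverse
  set G : PowerSeries ℂ := PowerSeries.C (((γ (k - 1) : ℝ) : ℂ))⁻¹ * (M.map geomPS).prod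
    with hGdef
  have hγc : ((γ (k - 1) : ℝ) : ℂ) ≠ 0 := Complex.ofReal_ne_zero.mpr hγ
  have hQcG : ((Qc : Polynomial ℂ) : PowerSeries ℂ) * G = 1 := by
    rw [hQc_fact, hGdef]
    push_cast [Polynomial.coe_mul, Polynomial.coe_C]
    have hcoeprod : (((M.map fun z => 1 - Polynomial.C z * Polynomial.X).prod : ℂ[X])
        : PowerSeries ℂ)
        = (M.map fun z => ((1 - Polynomial.C z * Polynomial.X : ℂ[X]) : PowerSeries ℂ)).prod := by
      rw [← Polynomial.coeToPowerSeries.ringHom_apply, map_multiset_prod, Multiset.map_map]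
      rfl
    rw [hcoeprod, mul_mul_mul_comm, ← Multiset.prod_map_mul]
    have h1 : PowerSeries.C ((γ (k - 1) : ℝ) : ℂ) * PowerSeries.C (((γ (k - 1) : ℝ) : ℂ))⁻¹
        = 1 := by
      rw [← _root_.map_mul, mul_inv_cancel₀ hγc, _root_.map_one]
    have h2 : (M.map fun z =>
        ((1 - Polynomial.C z * Polynomial.X : ℂ[X]) : PowerSeries ℂ) * geomPS z).prod = 1 := by
      rw [Multiset.map_congr rfl fun z _ => geom_inv z, Multiset.prod_map_one]
    rw [h1, h2, mul_one]
  have hmapQ : PowerSeries.map (algebraMap ℝ ℂ) (Q : PowerSeries ℝ)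
      = ((Qc : Polynomial ℂ) : PowerSeries ℂ) := by
    ext n
    rw [PowerSeries.coeff_map, Polynomial.coeff_coe, Polynomial.coeff_coe, hQcdef,
      Polynomial.coeff_map]
  have hmapS : PowerSeries.map (algebraMap ℝ ℂ) S = G := by
    have h1 : ((Qc : Polynomial ℂ) : PowerSeries ℂ) * PowerSeries.map (algebraMap ℝ ℂ) S = 1 := by
      rw [← hmapQ, ← _root_.map_mul, hQS, _root_.map_one]
    calc PowerSeries.map (algebraMap ℝ ℂ) S
        = PowerSeries.map (algebraMap ℝ ℂ) S * (((Qc : Polynomial ℂ) : PowerSeries ℂ) * G) := by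
          rw [hQcG, mul_one]
      _ = (((Qc : Polynomial ℂ) : PowerSeries ℂ) * PowerSeries.map (algebraMap ℝ ℂ) S) * G := by
          ring
      _ = G := by rw [h1, one_mul]
  have hb_bound : ∀ n, |b n| ≤ |γ (k - 1)|⁻¹ * PowerSeries.coeff n (qPS q ^ (k - 1)) := by
    intro n
    have h1 : ((b n : ℝ) : ℂ) = PowerSeries.coeff n G := by
      rw [← hmapS, PowerSeries.coeff_map]
      rfl
    have h2 : |b n| = ‖((b n : ℝ) : ℂ)‖ := by rw [Complex.norm_real, Real.norm_eq_abs]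
    rw [h2, h1, hGdef, PowerSeries.coeff_C_mul, norm_mul, norm_inv]
    have h3 : ‖((γ (k - 1) : ℝ) : ℂ)‖ = |γ (k - 1)| := by rw [Complex.norm_real, Real.norm_eq_abs]
    rw [h3]
    have h4 := coeff_prod_bound hq0 M hMq n
    rw [hcard] at h4
    exact mul_le_mul_of_nonneg_left h4 (by positivity)
  -- the matrix inverse
  have hRent : ∀ (N : ℕ) (i l : Fin N), RNmat k γ N i l
      = if (l : ℕ) ≤ (i : ℕ) then Q.coeff ((i : ℕ) - (l : ℕ)) else 0 := by
    intro N i l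
    simp only [RNmat]
    rw [hQcoeff]
    by_cases h1 : (l : ℕ) ≤ (i : ℕ)
    · by_cases h2 : (i : ℕ) - (l : ℕ) ≤ k - 1 <;> simp [h1, h2]
    · simp [h1]
  refine ⟨|γ (k - 1)|⁻¹ * ((1 - q)⁻¹) ^ (k - 1), fun N hN => ?_⟩
  set B : Matrix (Fin N) (Fin N) ℝ :=
    (fun i j => if (j : ℕ) ≤ (i : ℕ) then b ((i : ℕ) - (j : ℕ)) else 0) with hBdef
  have hBent : ∀ i j : Fin N, B i j = if (j : ℕ) ≤ (i : ℕ) then b ((i : ℕ) - (j : ℕ)) else 0 :=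
    fun i j => rfl
  have hRB : RNmat k γ N * B = 1 := by
    ext i j
    rw [Matrix.mul_apply, Matrix.one_apply]
    simp only [hBent]
    by_cases hij : (j : ℕ) ≤ (i : ℕ)
    · have hstep1 : ∑ l : Fin N, RNmat k γ N i l
          * (if (j : ℕ) ≤ (l : ℕ) then b ((l : ℕ) - (j : ℕ)) else 0)
          = ∑ n ∈ Finset.range N, (if n ≤ (i : ℕ) then Q.coeff ((i : ℕ) - n) else 0) *
              (if (j : ℕ) ≤ n then b (n - (j : ℕ)) else 0) := by
        rw [← Fin.sum_univ_eq_sum_range (fun n =>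
          (if n ≤ (i : ℕ) then Q.coeff ((i : ℕ) - n) else 0) *
              (if (j : ℕ) ≤ n then b (n - (j : ℕ)) else 0)) N]
        exact Finset.sum_congr rfl fun l _ => by rw [hRent]
      rw [hstep1]
      have hsub : Finset.Icc (j : ℕ) (i : ℕ) ⊆ Finset.range N := by
        intro n hn
        rw [Finset.mem_Icc] at hn
        rw [Finset.mem_range]
        exact lt_of_le_of_lt hn.2 i.isLt
      rw [← Finset.sum_subset hsub (fun n hn hn' => ?_)]
      swap
      · rw [Finset.mem_Icc] at hn'
        rw [Finset.mem_range] at hn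
        by_cases h1 : n ≤ (i : ℕ)
        · by_cases h2 : (j : ℕ) ≤ n
          · exact absurd ⟨h2, h1⟩ hn'
          · simp [h2]
        · simp [h1]
      have hstep2 : ∑ n ∈ Finset.Icc (j : ℕ) (i : ℕ),
          (if n ≤ (i : ℕ) then Q.coeff ((i : ℕ) - n) else 0) *
              (if (j : ℕ) ≤ n then b (n - (j : ℕ)) else 0)
          = ∑ p ∈ Finset.HasAntidiagonal.antidiagonal ((i : ℕ) - (j : ℕ)), Q.coeff p.1 * b p.2 := by
        refine Finset.sum_nbij' (fun n => ((i : ℕ) - n, n - (j : ℕ)))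
          (fun p => (i : ℕ) - p.1) ?_ ?_ ?_ ?_ ?_
        · intro n hn
          rw [Finset.mem_Icc] at hn
          rw [Finset.HasAntidiagonal.mem_antidiagonal]
          dsimp only
          omega
        · intro p hp
          rw [Finset.HasAntidiagonal.mem_antidiagonal] at hp
          rw [Finset.mem_Icc]
          omega
        · intro n hn
          rw [Finset.mem_Icc] at hn
          dsimp only
          omega
        · rintro ⟨u, v⟩ hp
          rw [Finset.HasAntidiagonal.mem_antidiagonal] at hp
          dsimp only at hp ⊢
          rw [Prod.mk.injEq]
          omega
        · intro n hn
          rw [Finset.mem_Icc] at hn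
          dsimp only
          rw [if_pos hn.2, if_pos hn.1]
      rw [hstep2, hconv]
      by_cases hij' : i = j
      · rw [if_pos (by omega), if_pos hij']
      · rw [if_neg (fun h => hij' (Fin.ext (by omega))), if_neg hij']
    · rw [if_neg (fun h => hij (by rw [h]))]
      refine Finset.sum_eq_zero fun l _ => ?_
      rw [hRent]
      by_cases h1 : (l : ℕ) ≤ (i : ℕ)
      · rw [if_neg (fun h2 : (j : ℕ) ≤ (l : ℕ) => hij (le_trans h2 h1)), mul_zero]
      · rw [if_neg h1, zero_mul]
  refine ⟨B, hRB, mul_eq_one_comm.mp hRB, ?_⟩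
  rw [infNorm]
  haveI : Nonempty (Fin N) := Fin.pos_iff_nonempty.mp (by omega)
  refine ciSup_le fun i => ?_
  calc ∑ j, |B i j|
      = ∑ n ∈ Finset.range N, |if n ≤ (i : ℕ) then b ((i : ℕ) - n) else 0| := by
        rw [← Fin.sum_univ_eq_sum_range (fun n => |if n ≤ (i : ℕ) then b ((i : ℕ) - n) else 0|) N]
    _ = ∑ n ∈ Finset.range ((i : ℕ) + 1), |if n ≤ (i : ℕ) then b ((i : ℕ) - n) else 0| := by
        refine (Finset.sum_subset ?_ ?_).symm
        · intro n hn
          rw [Finset.mem_range] at *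
          have := i.isLt
          omega
        · intro n _ hn'
          rw [Finset.mem_range] at hn'
          rw [if_neg (by omega), abs_zero]
    _ = ∑ n ∈ Finset.range ((i : ℕ) + 1), |b ((i : ℕ) - n)| := by
        refine Finset.sum_congr rfl fun n hn => ?_
        rw [Finset.mem_range] at hn
        rw [if_pos (by omega)]
    _ = ∑ n ∈ Finset.range ((i : ℕ) + 1), |b n| := by
        have h := Finset.sum_range_reflect (fun m => |b m|) ((i : ℕ) + 1)
        simpa using h
    _ ≤ ∑ n ∈ Finset.range ((i : ℕ) + 1),
          |γ (k - 1)|⁻¹ * PowerSeries.coeff n (qPS q ^ (k - 1)) :=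
        Finset.sum_le_sum fun n _ => hb_bound n
    _ = |γ (k - 1)|⁻¹ * ∑ n ∈ Finset.range ((i : ℕ) + 1),
          PowerSeries.coeff n (qPS q ^ (k - 1)) := by
        rw [Finset.mul_sum]
    _ ≤ |γ (k - 1)|⁻¹ * ((1 - q)⁻¹) ^ (k - 1) :=
        mul_le_mul_of_nonneg_left (sum_coeff_qpow_le hq0 hq1 (k - 1) ((i : ℕ) + 1))
          (by positivity)
end

section
/- For an N×N matrix A that is strictly diagonally dominant in the sense that its lower logarithmic max norm m_∞[A] = min_i (Re a_{ii} − Σ_{j≠i} |a_{ij}|) is positive, A is invertible and ‖A^{-1}‖_∞ ≤ 1/m_∞[A]. -/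
open Matrix Finset

/-- Lower logarithmic max norm: min over rows of (diagonal − off-diagonal absolute sum). -/
noncomputable def logNormLower {N : ℕ} (A : Matrix (Fin N) (Fin N) ℝ) : ℝ :=
  ⨅ i, (A i i - ∑ j ∈ Finset.univ.erase i, |A i j|)

lemma logNormLower_le {N : ℕ} (hN : 1 ≤ N) (A : Matrix (Fin N) (Fin N) ℝ) (k : Fin N) :
    logNormLower A ≤ A k k - ∑ j ∈ Finset.univ.erase k, |A k j| := by
  haveI : Nonempty (Fin N) := ⟨⟨0, hN⟩⟩
  exact ciInf_le (Finite.bddBelow_range _) k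

lemma key_bound {N : ℕ} (hN : 1 ≤ N) (A : Matrix (Fin N) (Fin N) ℝ)
    (y : Fin N → ℝ) :
    ∃ k : Fin N, (∀ j, |y j| ≤ |y k|) ∧
      logNormLower A * |y k| ≤ |A.mulVec y k| := by
  haveI : Nonempty (Fin N) := ⟨⟨0, hN⟩⟩
  obtain ⟨k, hk⟩ := Finite.exists_max (fun j => |y j|)
  refine ⟨k, hk, ?_⟩
  have hm := logNormLower_le hN A k
  have hAk : A.mulVec y k = A k k * y k + ∑ j ∈ Finset.univ.erase k, A k j * y j := by
    rw [Matrix.mulVec, dotProduct]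
    exact (Finset.add_sum_erase Finset.univ (fun j => A k j * y j) (Finset.mem_univ k)).symm
  have habs : |A k k * y k| - |∑ j ∈ Finset.univ.erase k, A k j * y j|
      ≤ |A.mulVec y k| := by
    rw [hAk]
    have h := abs_add_le (A k k * y k + ∑ j ∈ Finset.univ.erase k, A k j * y j)
      (-(∑ j ∈ Finset.univ.erase k, A k j * y j))
    simp only [add_neg_cancel_right, abs_neg] at h
    linarith
  have hsum : |∑ j ∈ Finset.univ.erase k, A k j * y j|
      ≤ (∑ j ∈ Finset.univ.erase k, |A k j|) * |y k| := by
    calc |∑ j ∈ Finset.univ.erase k, A k j * y j|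
        ≤ ∑ j ∈ Finset.univ.erase k, |A k j * y j| := Finset.abs_sum_le_sum_abs _ _
      _ ≤ ∑ j ∈ Finset.univ.erase k, |A k j| * |y k| := by
          refine Finset.sum_le_sum fun j _ => ?_
          rw [abs_mul]
          exact mul_le_mul_of_nonneg_left (hk j) (abs_nonneg _)
      _ = (∑ j ∈ Finset.univ.erase k, |A k j|) * |y k| := by rw [Finset.sum_mul]
  have hAkk : |A k k * y k| = A k k * |y k| ∨ |A k k * y k| = -(A k k) * |y k| := by
    rw [abs_mul]
    rcases abs_cases (A k k) with ⟨h, _⟩ | ⟨h, _⟩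
    · left; rw [h]
    · right; rw [h]
  rcases hAkk with h | h
  · nlinarith [abs_nonneg (y k)]
  · nlinarith [abs_nonneg (y k), abs_nonneg (A k k * y k),
      Finset.sum_nonneg (fun j (_ : j ∈ Finset.univ.erase k) => abs_nonneg (A k j))]

theorem stmt5 (N : ℕ) (hN : 1 ≤ N) (A : Matrix (Fin N) (Fin N) ℝ)
    (hdom : 0 < logNormLower A) :
    ∃ B : Matrix (Fin N) (Fin N) ℝ,
      A * B = 1 ∧ B * A = 1 ∧ infNorm B ≤ 1 / logNormLower A := by
  haveI : Nonempty (Fin N) := ⟨⟨0, hN⟩⟩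
  set m := logNormLower A with hm
  have hdiag : ∀ k, ∑ j ∈ Finset.univ.erase k, ‖A k j‖ < ‖A k k‖ := by
    intro k
    have h1 := logNormLower_le hN A k
    have h2 : (0:ℝ) ≤ ∑ j ∈ Finset.univ.erase k, |A k j| :=
      Finset.sum_nonneg fun j _ => abs_nonneg _
    have hAkk : 0 < A k k := by linarith
    simp only [Real.norm_eq_abs, abs_of_pos hAkk]
    linarith
  have hdet : A.det ≠ 0 := det_ne_zero_of_sum_row_lt_diag hdiag
  have hunit : IsUnit A.det := isUnit_iff_ne_zero.mpr hdet
  refine ⟨A⁻¹, A.mul_nonsing_inv hunit, A.nonsing_inv_mul hunit, ?_⟩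
  refine ciSup_le fun i => ?_
  set x : Fin N → ℝ := fun j => if 0 ≤ A⁻¹ i j then 1 else -1 with hx
  set y : Fin N → ℝ := A⁻¹.mulVec x with hy
  have hAy : A.mulVec y = x := by
    rw [hy, Matrix.mulVec_mulVec, A.mul_nonsing_inv hunit, Matrix.one_mulVec]
  have hyi : y i = ∑ j, |A⁻¹ i j| := by
    rw [hy, Matrix.mulVec, dotProduct]
    refine Finset.sum_congr rfl fun j _ => ?_
    simp only [hx]
    split_ifs with h
    · rw [abs_of_nonneg h]; ring
    · rw [abs_of_neg (lt_of_not_ge h)]; ring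
  obtain ⟨k, hk, hkey⟩ := key_bound hN A y
  have hxk : |x k| ≤ 1 := by
    simp only [hx]; split_ifs <;> simp
  have hAyk : |A.mulVec y k| ≤ 1 := by rw [hAy]; exact hxk
  have hyk : |y k| ≤ 1 / m := by
    rw [le_div_iff₀ hdom]
    calc |y k| * m = m * |y k| := mul_comm _ _
      _ ≤ |A.mulVec y k| := hkey
      _ ≤ 1 := hAyk
  calc ∑ j, |A⁻¹ i j| = y i := hyi.symm
    _ ≤ |y i| := le_abs_self _
    _ ≤ |y k| := hk i
    _ ≤ 1 / m := hyk
end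

section
/- For a real number r, the inequality 1 + 2r − r² > 0 holds if and only if 1 − √2 < r < 1 + √2; hence the variable-step BDF2 extraneous matrix, lower bidiagonal with diagonal entries (1+2r_n)/2 and subdiagonal entries −r_n²/2, has positive lower logarithmic max norm whenever all step ratios satisfy 0 < r_n < 1 + √2. -/
open Matrix Finset

theorem stmt13 :
    (∀ r : ℝ, (0 < 1 + 2 * r - r ^ 2 ↔ 1 - Real.sqrt 2 < r ∧ r < 1 + Real.sqrt 2)) ∧
    ∀ (N : ℕ), 1 ≤ N → ∀ (r : Fin N → ℝ),
      (∀ n, 0 < r n ∧ r n < 1 + Real.sqrt 2) →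
      ∀ A : Matrix (Fin N) (Fin N) ℝ,
        (∀ i j : Fin N, A i j =
          if i = j then (1 + 2 * r i) / 2
          else if (i : ℕ) = (j : ℕ) + 1 then -((r i) ^ 2) / 2 else 0) →
        0 < logNormLower A := by
  have hs : Real.sqrt 2 ^ 2 = 2 := Real.sq_sqrt (by norm_num)
  have hs0 : 0 < Real.sqrt 2 := Real.sqrt_pos.2 (by norm_num)
  constructor
  · intro r
    constructor
    · intro h
      constructor
      · nlinarith [sq_nonneg (r - 1 + Real.sqrt 2)]
      · nlinarith [sq_nonneg (r - 1 - Real.sqrt 2)]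
    · rintro ⟨h1, h2⟩
      nlinarith [mul_pos (sub_pos.2 h2) (sub_pos.2 h1)]
  · intro N hN r hr A hA
    have key : ∀ i : Fin N, 0 < A i i - ∑ j ∈ Finset.univ.erase i, |A i j| := by
      intro i
      have hr1 := (hr i).1
      have hr2 := (hr i).2
      have hpos : 0 < (1 + 2 * r i - r i ^ 2) / 2 := by
        nlinarith [mul_pos (sub_pos.2 hr2) (show (0:ℝ) < r i - (1 - Real.sqrt 2) by
          nlinarith)]
      have hdiag : A i i = (1 + 2 * r i) / 2 := by rw [hA i i]; simp
      rcases Nat.eq_zero_or_pos i.val with h0 | h1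
      · have hsum : ∑ j ∈ Finset.univ.erase i, |A i j| = 0 := by
          apply Finset.sum_eq_zero
          intro j hj
          rw [Finset.mem_erase] at hj
          rw [hA i j, if_neg (Ne.symm hj.1), if_neg (by omega), abs_zero]
        rw [hsum, hdiag]
        nlinarith
      · obtain ⟨k, hk⟩ : ∃ k, i.val = k + 1 := ⟨i.val - 1, by omega⟩
        have hkN : k < N := by omega
        set j₀ : Fin N := ⟨k, hkN⟩ with hj₀
        have hj₀v : (j₀ : ℕ) = k := rfl
        have hsum : ∑ j ∈ Finset.univ.erase i, |A i j| = r i ^ 2 / 2 := by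
          have : ∀ j ∈ Finset.univ.erase i, |A i j| =
              if j = j₀ then r i ^ 2 / 2 else 0 := by
            intro j hj
            rw [Finset.mem_erase] at hj
            rw [hA i j, if_neg (Ne.symm hj.1)]
            by_cases hcase : (i : ℕ) = (j : ℕ) + 1
            · have : j = j₀ := Fin.ext (by rw [hj₀v]; omega)
              rw [if_pos hcase, this, if_pos rfl]
              rw [abs_of_nonpos (by nlinarith [sq_nonneg (r i)])]
              ring
            · rw [if_neg hcase, if_neg (by
                intro hjj; apply hcase; rw [hjj, hj₀v]; omega), abs_zero]
          rw [Finset.sum_congr rfl this, Finset.sum_ite_eq' _ j₀]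
          rw [if_pos]
          rw [Finset.mem_erase]
          refine ⟨?_, Finset.mem_univ _⟩
          intro hji; have := congrArg Fin.val hji; rw [hj₀v] at this; omega
        rw [hsum, hdiag]
        linarith [hpos]
    have hne : Nonempty (Fin N) := ⟨⟨0, by omega⟩⟩
    unfold logNormLower
    obtain ⟨i₀, hi₀⟩ := Finite.exists_min (fun i : Fin N => A i i - ∑ j ∈ Finset.univ.erase i, |A i j|)
    exact lt_of_lt_of_le (key i₀) (le_ciInf hi₀)
end

section
/- For real v with −1/4 < v < 2/19, the quantity (22 + 7v − |14 + 29v| − |4 + 16v|)/12 equals (2 − 19v)/6 and is strictly positive; hence the lower triangular matrix with row pattern (1/12)·(4 + 16v, −(14 + 29v), 22 + 7v) is strictly diagonally dominant and its inverse has infinity norm at most 6/(2 − 19v). -/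
open Matrix Finset

lemma sum_ite_le_aux {N : ℕ} (s : Finset (Fin N)) (p : Fin N → Prop) [DecidablePred p]
    (hp : ∀ a b, p a → p b → a = b) (c : ℝ) (hc : 0 ≤ c) :
    ∑ j ∈ s, (if p j then c else 0) ≤ c := by
  rw [← Finset.sum_filter, Finset.sum_const, nsmul_eq_mul]
  have hcard : (s.filter p).card ≤ 1 := by
    apply Finset.card_le_one.mpr
    intro a ha b hb
    exact hp a b (Finset.mem_filter.mp ha).2 (Finset.mem_filter.mp hb).2
  calc ((s.filter p).card : ℝ) * c ≤ 1 * c := by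
        apply mul_le_mul_of_nonneg_right _ hc
        exact_mod_cast hcard
    _ = c := one_mul c

lemma bound_aux {N : ℕ} (A : Matrix (Fin N) (Fin N) ℝ) (m : ℝ) (hm : 0 ≤ m)
    (hd : ∀ i, m ≤ A i i - ∑ j ∈ Finset.univ.erase i, |A i j|)
    (x : Fin N → ℝ) (i : Fin N) (hi : ∀ j, |x j| ≤ |x i|) :
    m * |x i| ≤ |A.mulVec x i| := by
  have hS : (0:ℝ) ≤ ∑ j ∈ Finset.univ.erase i, |A i j| :=
    Finset.sum_nonneg fun j _ => abs_nonneg _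
  have hAx : A.mulVec x i = A i i * x i + ∑ j ∈ Finset.univ.erase i, A i j * x j := by
    rw [Matrix.mulVec, dotProduct]
    exact (Finset.add_sum_erase _ _ (Finset.mem_univ i)).symm
  have h1 : |∑ j ∈ Finset.univ.erase i, A i j * x j|
      ≤ (∑ j ∈ Finset.univ.erase i, |A i j|) * |x i| := by
    calc |∑ j ∈ Finset.univ.erase i, A i j * x j|
        ≤ ∑ j ∈ Finset.univ.erase i, |A i j * x j| := Finset.abs_sum_le_sum_abs _ _
      _ ≤ ∑ j ∈ Finset.univ.erase i, |A i j| * |x i| := by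
          apply Finset.sum_le_sum
          intro j _
          rw [abs_mul]
          exact mul_le_mul_of_nonneg_left (hi j) (abs_nonneg _)
      _ = (∑ j ∈ Finset.univ.erase i, |A i j|) * |x i| := by rw [Finset.sum_mul]
  have hAii : 0 ≤ A i i := by have := hd i; linarith
  have h2 : |A i i * x i| ≤ |A.mulVec x i| + |∑ j ∈ Finset.univ.erase i, A i j * x j| := by
    have : A i i * x i = A.mulVec x i + -(∑ j ∈ Finset.univ.erase i, A i j * x j) := by
      rw [hAx]; ring
    rw [this]
    calc |A.mulVec x i + -(∑ j ∈ Finset.univ.erase i, A i j * x j)|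
        ≤ |A.mulVec x i| + |-(∑ j ∈ Finset.univ.erase i, A i j * x j)| := abs_add_le _ _
      _ = _ := by rw [abs_neg]
  rw [abs_mul, abs_of_nonneg hAii] at h2
  nlinarith [hd i, abs_nonneg (x i)]

lemma inv_bound {N : ℕ} (hN : 1 ≤ N) (A : Matrix (Fin N) (Fin N) ℝ) (m : ℝ) (hm : 0 < m)
    (hd : ∀ i, m ≤ A i i - ∑ j ∈ Finset.univ.erase i, |A i j|) :
    ∃ B : Matrix (Fin N) (Fin N) ℝ, A * B = 1 ∧ B * A = 1 ∧ infNorm B ≤ 1 / m := by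
  haveI : NeZero N := ⟨by omega⟩
  have hinj : ∀ x : Fin N → ℝ, A.mulVec x = 0 → x = 0 := by
    intro x hx
    obtain ⟨i, _, hi⟩ := Finset.exists_max_image Finset.univ (fun j => |x j|)
      ⟨⟨0, by omega⟩, Finset.mem_univ _⟩
    have hb := bound_aux A m hm.le hd x i (fun j => hi j (Finset.mem_univ j))
    rw [hx] at hb
    simp only [Pi.zero_apply, abs_zero] at hb
    have hxi : |x i| ≤ 0 := by nlinarith
    funext j
    have := hi j (Finset.mem_univ j)
    have : |x j| ≤ 0 := le_trans this hxi
    simpa [abs_nonpos_iff] using this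
  have hdet : A.det ≠ 0 := by
    intro h
    obtain ⟨w, hw0, hw⟩ := (Matrix.exists_mulVec_eq_zero_iff).mpr h
    exact hw0 (hinj w hw)
  have hu : IsUnit A.det := isUnit_iff_ne_zero.mpr hdet
  refine ⟨A⁻¹, Matrix.mul_nonsing_inv A hu, Matrix.nonsing_inv_mul A hu, ?_⟩
  rw [infNorm]
  apply ciSup_le
  intro i
  set y : Fin N → ℝ := fun j => if 0 ≤ A⁻¹ i j then 1 else -1 with hy
  set x : Fin N → ℝ := A⁻¹.mulVec y with hxdef
  have hyx : A.mulVec x = y := by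
    rw [hxdef, Matrix.mulVec_mulVec, Matrix.mul_nonsing_inv A hu, Matrix.one_mulVec]
  have hx_i : x i = ∑ j, |A⁻¹ i j| := by
    rw [hxdef, Matrix.mulVec, dotProduct]
    apply Finset.sum_congr rfl
    intro j _
    rw [hy]
    by_cases h : 0 ≤ A⁻¹ i j
    · simp [h, abs_of_nonneg h]
    · simp [h, abs_of_neg (lt_of_not_ge h)]
  obtain ⟨i₀, _, hi₀⟩ := Finset.exists_max_image Finset.univ (fun j => |x j|)
    ⟨⟨0, by omega⟩, Finset.mem_univ _⟩
  have hb := bound_aux A m hm.le hd x i₀ (fun j => hi₀ j (Finset.mem_univ j))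
  rw [hyx] at hb
  have hy1 : |y i₀| ≤ 1 := by
    rw [hy]; by_cases h : 0 ≤ A⁻¹ i i₀ <;> simp [h]
  have hxi₀ : |x i₀| ≤ 1 / m := by
    rw [le_div_iff₀ hm, mul_comm]
    exact le_trans hb hy1
  calc ∑ j, |A⁻¹ i j| = x i := hx_i.symm
    _ ≤ |x i| := le_abs_self _
    _ ≤ |x i₀| := hi₀ i (Finset.mem_univ i)
    _ ≤ 1 / m := hxi₀

theorem stmt19 (v : ℝ) (hv1 : -(1 / 4) < v) (hv2 : v < 2 / 19) :
    ((22 + 7 * v - |14 + 29 * v| - |4 + 16 * v|) / 12 = (2 - 19 * v) / 6 ∧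
      0 < (2 - 19 * v) / 6) ∧
    ∀ N : ℕ, 1 ≤ N → ∀ A : Matrix (Fin N) (Fin N) ℝ,
      (∀ i j : Fin N, A i j =
        if i = j then (22 + 7 * v) / 12
        else if (i : ℕ) = (j : ℕ) + 1 then -(14 + 29 * v) / 12
        else if (i : ℕ) = (j : ℕ) + 2 then (4 + 16 * v) / 12 else 0) →
      0 < logNormLower A ∧
      ∃ B : Matrix (Fin N) (Fin N) ℝ,
        A * B = 1 ∧ B * A = 1 ∧ infNorm B ≤ 6 / (2 - 19 * v) := by
  have h14 : (0:ℝ) ≤ 14 + 29 * v := by linarith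
  have h4 : (0:ℝ) ≤ 4 + 16 * v := by linarith
  have hm : (0:ℝ) < (2 - 19 * v) / 6 := by linarith
  constructor
  · constructor
    · rw [abs_of_nonneg h14, abs_of_nonneg h4]; ring
    · exact hm
  intro N hN A hA
  haveI : NeZero N := ⟨by omega⟩
  have hd : ∀ i, (2 - 19 * v) / 6 ≤ A i i - ∑ j ∈ Finset.univ.erase i, |A i j| := by
    intro i
    have hAii : A i i = (22 + 7 * v) / 12 := by rw [hA i i]; simp
    have hSle : ∑ j ∈ Finset.univ.erase i, |A i j|
        ≤ (14 + 29 * v) / 12 + (4 + 16 * v) / 12 := by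
      have step1 : ∑ j ∈ Finset.univ.erase i, |A i j|
          ≤ ∑ j ∈ Finset.univ.erase i,
            ((if (i : ℕ) = (j : ℕ) + 1 then (14 + 29 * v) / 12 else 0)
              + (if (i : ℕ) = (j : ℕ) + 2 then (4 + 16 * v) / 12 else 0)) := by
        apply Finset.sum_le_sum
        intro j hj
        have hji : j ≠ i := Finset.ne_of_mem_erase hj
        rw [hA i j, if_neg (fun h => hji h.symm)]
        split_ifs with h1 h2 h2
        · rw [abs_div, abs_neg, abs_of_nonneg h14]
          have : |(12:ℝ)| = 12 := by norm_num
          rw [this]; linarith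
        · rw [abs_div, abs_neg, abs_of_nonneg h14]
          have : |(12:ℝ)| = 12 := by norm_num
          rw [this]; linarith
        · rw [abs_div, abs_of_nonneg h4]
          have : |(12:ℝ)| = 12 := by norm_num
          rw [this]; linarith
        · simp
      rw [Finset.sum_add_distrib] at step1
      have s1 : ∑ j ∈ Finset.univ.erase i,
          (if (i : ℕ) = (j : ℕ) + 1 then (14 + 29 * v) / 12 else 0)
          ≤ (14 + 29 * v) / 12 := by
        apply sum_ite_le_aux
        · intro a b ha hb
          apply Fin.ext
          omega
        · linarith
      have s2 : ∑ j ∈ Finset.univ.erase i,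
          (if (i : ℕ) = (j : ℕ) + 2 then (4 + 16 * v) / 12 else 0)
          ≤ (4 + 16 * v) / 12 := by
        apply sum_ite_le_aux
        · intro a b ha hb
          apply Fin.ext
          omega
        · linarith
      linarith
    rw [hAii]; linarith
  constructor
  · rw [logNormLower]
    haveI : Nonempty (Fin N) := ⟨⟨0, by omega⟩⟩
    exact lt_of_lt_of_le hm (le_ciInf hd)
  · obtain ⟨B, h1, h2, h3⟩ := inv_bound hN A ((2 - 19 * v) / 6) hm hd
    refine ⟨B, h1, h2, ?_⟩
    have : 1 / ((2 - 19 * v) / 6) = 6 / (2 - 19 * v) := by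
      rw [one_div, inv_div]
    rwa [this] at h3
end
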